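/- Let k be a field, V a nonzero k-vector space, and X a subset of End_k(V). Then X is triangularizable if and only if there exists a set U of X-invariant subspaces of V such that U is well-ordered by set inclusion and U is maximal among all subsets of the set of subspaces of V that are well-ordered by inclusion. -/

import Mathlib

universe u v

variable {k : Type u} {V : Type v} [Field k] [AddCommGroup V] [Module k V]

/-- A set `U` of subspaces of `V` is well-ordered by set inclusion: it is totally ordered
by inclusion and every nonempty subset of `U` has a least element. -/
def WellOrderedByInclusion (U : Set (Submodule k V)) : Prop :=
  (∀ W₁ ∈ U, ∀ W₂ ∈ U, W₁ ≤ W₂ ∨ W₂ ≤ W₁) ∧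
    ∀ S ⊆ U, S.Nonempty → ∃ W ∈ S, ∀ W' ∈ S, W ≤ W'

theorem li_of_wo {ι : Type*} [LinearOrder ι] (f : ι → V)
    (h : ∀ i, f i ∉ Submodule.span k (f '' {j | j < i})) : LinearIndependent k f := by
  rw [linearIndependent_iff]
  intro l hl
  by_contra hne
  have hsupp : l.support.Nonempty := Finsupp.support_nonempty_iff.2 hne
  set i := l.support.max' hsupp with hi
  have hmem : i ∈ l.support := l.support.max'_mem hsupp
  have hli : l i ≠ 0 := Finsupp.mem_support_iff.1 hmem
  have hsum : ∑ j ∈ l.support, l j • f j = 0 := by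
    rwa [Finsupp.linearCombination_apply, Finsupp.sum] at hl
  rw [← Finset.add_sum_erase _ _ hmem] at hsum
  have hrest : ∑ j ∈ l.support.erase i, l j • f j ∈ Submodule.span k (f '' {j | j < i}) := by
    apply Submodule.sum_mem
    intro j hj
    apply Submodule.smul_mem
    apply Submodule.subset_span
    exact Set.mem_image_of_mem f (lt_of_le_of_ne (Finset.le_max' _ _ (Finset.mem_of_mem_erase hj))
      (Finset.ne_of_mem_erase hj))
  have hm : l i • f i ∈ Submodule.span k (f '' {j | j < i}) := by
    rw [eq_neg_of_add_eq_zero_left hsum]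
    exact Submodule.neg_mem _ hrest
  exact h i ((Submodule.smul_mem_iff _ hli).1 hm)

theorem fwd_dir [Nontrivial V] (X : Set (Module.End k V))
    (ι : Type v) (lo : LinearOrder ι) (hwf : WellFounded lo.lt)
    (b : Module.Basis ι k V)
    (htri : ∀ T ∈ X, ∀ i : ι, T (b i) ∈ Submodule.span k (⇑b '' {j | lo.le j i})) :
    ∃ U : Set (Submodule k V),
      (∀ W ∈ U, ∀ T ∈ X, ∀ v ∈ W, T v ∈ W) ∧
      WellOrderedByInclusion U ∧
      ∀ U' : Set (Submodule k V), WellOrderedByInclusion U' → U ⊆ U' → U' = U := by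
  letI := lo
  set L : Set ι → Submodule k V := fun S => Submodule.span k (⇑b '' S) with hL
  refine ⟨L '' {S | IsLowerSet S}, ?_, ⟨?_, ?_⟩, ?_⟩
  · -- invariance
    rintro _ ⟨S, hS, rfl⟩ T hT v hv
    have hmap : ∀ x ∈ ⇑b '' S, T x ∈ L S := by
      rintro _ ⟨j, hj, rfl⟩
      refine Submodule.span_mono (Set.image_mono (fun x hx => hS hx hj)) (htri T hT j)
    -- span induction
    refine Submodule.span_induction (p := fun x _ => T x ∈ L S) ?_ ?_ ?_ ?_ hv
    · exact hmap
    · simp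
    · intro x y _ _ hx hy
      rw [map_add]; exact Submodule.add_mem _ hx hy
    · intro c x _ hx
      rw [map_smul]; exact Submodule.smul_mem _ c hx
  · -- totality
    rintro _ ⟨S₁, h₁, rfl⟩ _ ⟨S₂, h₂, rfl⟩
    rcases h₁.total h₂ with h | h
    · exact Or.inl (Submodule.span_mono (Set.image_mono h))
    · exact Or.inr (Submodule.span_mono (Set.image_mono h))
  · -- least element
    intro S hS hne
    set T : Set (Set ι) := {S' | IsLowerSet S' ∧ L S' ∈ S} with hT
    have hTne : T.Nonempty := by
      obtain ⟨W, hW⟩ := hne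
      obtain ⟨S', hS', rfl⟩ := hS hW
      exact ⟨S', hS', hW⟩
    set I : Set ι := ⋂₀ T with hI
    by_cases hIc : Iᶜ.Nonempty
    · obtain ⟨S₀, hS₀T, hmS₀⟩ : ∃ S₀ ∈ T, hwf.min Iᶜ hIc ∉ S₀ := by
        have h : hwf.min Iᶜ hIc ∉ I := hwf.min_mem Iᶜ hIc
        have h2 : ¬ ∀ S₀ ∈ T, hwf.min Iᶜ hIc ∈ S₀ := fun hall => h (Set.mem_sInter.2 hall)
        push_neg at h2
        exact h2
      have hS₀I : S₀ = I := by
        refine le_antisymm (fun x hx => ?_) (Set.sInter_subset_of_mem hS₀T)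
        have hxm : lo.lt x (hwf.min Iᶜ hIc) := by
          rcases lt_or_ge x (hwf.min Iᶜ hIc) with h | h
          · exact h
          · exact absurd (hS₀T.1 h hx) hmS₀
        by_contra hxI
        exact hwf.not_lt_min Iᶜ hxI hxm
      refine ⟨L S₀, hS₀T.2, ?_⟩
      intro W' hW'
      obtain ⟨S'', hS'', rfl⟩ := hS hW'
      refine Submodule.span_mono (Set.image_mono ?_)
      rw [hS₀I]
      exact Set.sInter_subset_of_mem ⟨hS'', hW'⟩
    · have hIuniv : I = Set.univ := by
        rw [← Set.compl_empty_iff]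
        exact Set.not_nonempty_iff_eq_empty.1 hIc
      obtain ⟨W, hW⟩ := hne
      refine ⟨W, hW, fun W' hW' => ?_⟩
      obtain ⟨S', hS', rfl⟩ := hS hW
      obtain ⟨S'', hS'', h2⟩ := hS hW'
      have e1 : S' = Set.univ := Set.eq_univ_of_univ_subset
        (hIuniv ▸ Set.sInter_subset_of_mem (⟨hS', hW⟩ : S' ∈ T))
      have e2 : S'' = Set.univ := Set.eq_univ_of_univ_subset
        (hIuniv ▸ Set.sInter_subset_of_mem (⟨hS'', h2 ▸ hW'⟩ : S'' ∈ T))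
      rw [← h2, e1, e2]
  · -- maximality
    intro U' hU' hsub
    refine Set.Subset.antisymm (fun Z hZ => ?_) hsub
    have hcomp : ∀ S : Set ι, IsLowerSet S → L S ≤ Z ∨ Z ≤ L S :=
      fun S h => hU'.1 (L S) (hsub ⟨S, h, rfl⟩) Z hZ
    set S₀ : Set ι := ⋃₀ {S | IsLowerSet S ∧ L S ≤ Z} with hS₀
    have hS₀l : IsLowerSet S₀ := isLowerSet_sUnion (fun S hS => hS.1)
    have hS₀le : L S₀ ≤ Z := by
      rw [hL]
      rw [Submodule.span_le]
      rintro _ ⟨j, hj, rfl⟩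
      obtain ⟨S, hSA, hjS⟩ := hj
      exact hSA.2 (Submodule.subset_span (Set.mem_image_of_mem _ hjS))
    by_cases hc : Z ≤ L S₀
    · exact ⟨S₀, hS₀l, le_antisymm hS₀le hc⟩
    · have hne : S₀ᶜ.Nonempty := by
        rw [Set.nonempty_compl]
        intro h
        apply hc
        rw [h, hL]
        simp only [Set.image_univ, b.span_eq]
        exact le_top
      set m : ι := hwf.min S₀ᶜ hne with hm
      have hS₁l : IsLowerSet (insert m S₀) := by
        intro a c hle ha
        rcases ha with rfl | ha
        · rcases eq_or_lt_of_le hle with rfl | h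
          · exact Set.mem_insert _ _
          · right
            by_contra hcS
            exact hwf.not_lt_min S₀ᶜ hcS h
        · exact Or.inr (hS₀l hle ha)
      have hS₁B : Z ≤ L (insert m S₀) := by
        refine (hcomp _ hS₁l).resolve_left (fun h => ?_)
        exact hwf.min_mem S₀ᶜ hne
          (Set.subset_sUnion_of_mem (⟨hS₁l, h⟩ : _ ∈ {S | IsLowerSet S ∧ L S ≤ Z})
            (Set.mem_insert m S₀))
      have hLS₁ : L (insert m S₀) = L S₀ ⊔ Submodule.span k {b m} := by
        rw [hL]
        simp only
        rw [Set.image_insert_eq, Submodule.span_insert, sup_comm]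
      obtain ⟨z, hzZ, hz0⟩ := SetLike.exists_of_lt
        (lt_of_le_of_ne hS₀le (fun e => hc (le_of_eq e.symm)))
      have hz1 : z ∈ L S₀ ⊔ Submodule.span k {b m} := hLS₁ ▸ hS₁B hzZ
      rw [Submodule.mem_sup] at hz1
      obtain ⟨w, hw, u, hu, hwu⟩ := hz1
      rw [Submodule.mem_span_singleton] at hu
      obtain ⟨c, rfl⟩ := hu
      have hc0 : c ≠ 0 := by
        rintro rfl
        rw [zero_smul, add_zero] at hwu
        exact hz0 (hwu ▸ hw)
      have hbm : b m ∈ Z := by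
        have h1 : c • b m = z - w := by rw [← hwu]; abel
        have h2 : c • b m ∈ Z := h1 ▸ sub_mem hzZ (hS₀le hw)
        exact (Submodule.smul_mem_iff Z hc0).1 h2
      have hle : L (insert m S₀) ≤ Z := by
        rw [hLS₁]
        exact sup_le hS₀le ((Submodule.span_singleton_le_iff_mem _ _).2 hbm)
      exact ⟨insert m S₀, hS₁l, le_antisymm hle hS₁B⟩

theorem rev_dir [Nontrivial V] (X : Set (Module.End k V))
    (U : Set (Submodule k V))
    (hInv : ∀ W ∈ U, ∀ T ∈ X, ∀ v ∈ W, T v ∈ W)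
    (hWOI : WellOrderedByInclusion U)
    (hMax : ∀ U' : Set (Submodule k V), WellOrderedByInclusion U' → U ⊆ U' → U' = U) :
    ∃ (ι : Type v) (lo : LinearOrder ι), WellFounded lo.lt ∧
      ∃ b : Module.Basis ι k V, ∀ T ∈ X, ∀ i : ι,
        T (b i) ∈ Submodule.span k (⇑b '' {j | lo.le j i}) := by
  obtain ⟨hTot, hLeast⟩ := hWOI
  -- any submodule comparable with everything in U is in U
  have hclosed : ∀ Z : Submodule k V, (∀ W ∈ U, Z ≤ W ∨ W ≤ Z) → Z ∈ U := by
    intro Z hZ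
    have h1 : WellOrderedByInclusion (insert Z U) := by
      constructor
      · intro W₁ h₁ W₂ h₂
        rcases h₁ with rfl | h₁ <;> rcases h₂ with rfl | h₂
        · exact Or.inl le_rfl
        · exact hZ W₂ h₂
        · exact (hZ W₁ h₁).symm
        · exact hTot W₁ h₁ W₂ h₂
      · intro S hS hSne
        by_cases hZS : Z ∈ S
        · by_cases hS' : (S \ {Z}).Nonempty
          · have hsub : S \ {Z} ⊆ U := by
              rintro x ⟨hx, hxZ⟩
              rcases hS hx with rfl | h
              · exact absurd rfl hxZ
              · exact h
            obtain ⟨m, hmS, hm⟩ := hLeast (S \ {Z}) hsub hS'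
            rcases hZ m (hsub hmS) with hZm | hmZ
            · refine ⟨Z, hZS, fun W' hW' => ?_⟩
              rcases eq_or_ne W' Z with rfl | h
              · exact le_rfl
              · exact hZm.trans (hm W' ⟨hW', h⟩)
            · refine ⟨m, hmS.1, fun W' hW' => ?_⟩
              rcases eq_or_ne W' Z with rfl | h
              · exact hmZ
              · exact hm W' ⟨hW', h⟩
          · refine ⟨Z, hZS, fun W' hW' => ?_⟩
            have : W' = Z := by
              by_contra h
              exact hS' ⟨W', hW', h⟩
            exact this ▸ le_rfl
        · refine hLeast S (fun x hx => ?_) hSne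
          rcases hS hx with rfl | h
          · exact absurd hx hZS
          · exact h
    have := hMax _ h1 (Set.subset_insert _ _)
    rw [← this]
    exact Set.mem_insert _ _
  have hTopU : (⊤ : Submodule k V) ∈ U := hclosed ⊤ fun W _ => Or.inr le_top
  have hsSup : ∀ S ⊆ U, sSup S ∈ U := by
    intro S hS
    apply hclosed
    intro W hW
    by_cases h : ∀ s ∈ S, s ≤ W
    · exact Or.inl (sSup_le h)
    · push_neg at h
      obtain ⟨s, hsS, hsW⟩ := h
      exact Or.inr (((hTot W hW s (hS hsS)).resolve_right hsW).trans (le_sSup hsS))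
  -- index type
  set ιt : Type v := {W : Submodule k V // W ∈ U ∧ W ≠ ⊤} with hιt
  letI lo : LinearOrder ιt :=
    { (inferInstance : PartialOrder ιt) with
      le_total := fun a b => by
        have := hTot a.1 a.2.1 b.1 b.2.1
        rcases this with h | h
        · exact Or.inl (Subtype.coe_le_coe.1 h)
        · exact Or.inr (Subtype.coe_le_coe.1 h)
      toDecidableLE := Classical.decRel _ }
  have hwf : WellFounded lo.lt := by
    rw [WellFounded.wellFounded_iff_has_min]
    intro s hs
    obtain ⟨m, hm, hmin⟩ := hLeast (Subtype.val '' s)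
      (by rintro _ ⟨x, hx, rfl⟩; exact x.2.1) (hs.image _)
    obtain ⟨mi, hmi, rfl⟩ := hm
    refine ⟨mi, hmi, fun x hx hlt => ?_⟩
    exact hlt.not_ge (Subtype.coe_le_coe.1 (hmin x.1 ⟨x, hx, rfl⟩))
  -- successor
  have hsuccEx : ∀ i : ιt, ∃ W', (W' ∈ U ∧ i.1 < W') ∧
      ∀ W'', W'' ∈ U ∧ i.1 < W'' → W' ≤ W'' := by
    intro i
    obtain ⟨W', hW', hmin⟩ := hLeast {W | W ∈ U ∧ i.1 < W} (fun x hx => hx.1)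
      ⟨⊤, hTopU, lt_top_iff_ne_top.2 i.2.2⟩
    exact ⟨W', hW', fun W'' h => hmin W'' h⟩
  choose succ hsucc1 hsuccmin using hsuccEx
  have hsuccU : ∀ i : ιt, succ i ∈ U := fun i => (hsucc1 i).1
  have hsuccLt : ∀ i : ιt, i.1 < succ i := fun i => (hsucc1 i).2
  -- vectors
  have hvex : ∀ i : ιt, ∃ v : V, v ∈ succ i ∧ v ∉ i.1 := fun i =>
    SetLike.exists_of_lt (hsuccLt i)
  choose f hf1 hf2 using hvex
  -- succ i = i.1 ⊔ span {f i}
  have hsuccEq : ∀ i : ιt, succ i = i.1 ⊔ Submodule.span k {f i} := by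
    intro i
    set P := i.1 ⊔ Submodule.span k {f i} with hP
    have hPle : P ≤ succ i :=
      sup_le (hsuccLt i).le ((Submodule.span_singleton_le_iff_mem _ _).2 (hf1 i))
    have hPU : P ∈ U := by
      apply hclosed
      intro W hW
      rcases hTot W hW i.1 i.2.1 with h | h
      · exact Or.inr (h.trans le_sup_left)
      · rcases eq_or_ne W i.1 with rfl | hne
        · exact Or.inr le_sup_left
        · exact Or.inl (hPle.trans (hsuccmin i W ⟨hW, lt_of_le_of_ne h (Ne.symm hne)⟩))
    have hiP : i.1 < P := by
      refine lt_of_le_of_ne le_sup_left (fun h => hf2 i ?_)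
      rw [h]
      exact Submodule.mem_sup_right (Submodule.mem_span_singleton_self (f i))
    exact le_antisymm (hsuccmin i P ⟨hPU, hiP⟩) hPle
  -- key claim
  have hwfU : WellFounded (fun (a b : {W : Submodule k V // W ∈ U}) => a.1 < b.1) := by
    rw [WellFounded.wellFounded_iff_has_min]
    intro s hs
    obtain ⟨m, hm, hmin⟩ := hLeast (Subtype.val '' s)
      (by rintro _ ⟨x, hx, rfl⟩; exact x.2) (hs.image _)
    obtain ⟨mi, hmi, rfl⟩ := hm
    exact ⟨mi, hmi, fun x hx hlt => absurd (hmin x.1 ⟨x, hx, rfl⟩) (not_le_of_gt hlt)⟩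
  have hkey : ∀ W : {W : Submodule k V // W ∈ U},
      W.1 = Submodule.span k (f '' {i : ιt | i.1 < W.1}) := by
    intro W
    refine hwfU.induction
      (C := fun W => W.1 = Submodule.span k (f '' {i : ιt | i.1 < W.1})) W ?_
    rintro ⟨x, hxU⟩ IH
    have hge : Submodule.span k (f '' {i : ιt | i.1 < x}) ≤ x := by
      rw [Submodule.span_le]
      rintro _ ⟨i, hi, rfl⟩
      exact hsuccmin i x ⟨hxU, hi⟩ (hf1 i)
    refine le_antisymm ?_ hge
    set M := sSup {W' | W' ∈ U ∧ W' < x} with hMdef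
    have hMU : M ∈ U := hsSup _ (fun b hb => hb.1)
    have hMle : M ≤ x := sSup_le (fun b hb => hb.2.le)
    rcases eq_or_lt_of_le hMle with heq | hlt
    · refine le_trans (le_of_eq heq.symm) (sSup_le ?_)
      rintro b ⟨hbU, hbx⟩
      refine le_trans (le_of_eq (IH ⟨b, hbU⟩ hbx)) ?_
      exact Submodule.span_mono (Set.image_mono (fun i hi => lt_trans hi hbx))
    · have hMne : M ≠ ⊤ := ne_top_of_lt hlt
      set iM : ιt := ⟨M, hMU, hMne⟩ with hiM
      have h1 : succ iM ≤ x := hsuccmin iM x ⟨hxU, hlt⟩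
      have h2 : x ≤ succ iM := by
        by_contra hc
        have hlt2 : succ iM < x :=
          lt_of_le_of_ne ((hTot x hxU (succ iM) (hsuccU iM)).resolve_left hc)
            (fun e => hc (e ▸ le_rfl))
        have : succ iM ≤ M := le_sSup ⟨hsuccU iM, hlt2⟩
        exact absurd this (not_le_of_gt (hsuccLt iM))
      have hMspan : M ≤ Submodule.span k (f '' {i : ιt | i.1 < x}) := by
        refine le_trans (le_of_eq (IH ⟨M, hMU⟩ hlt)) ?_
        exact Submodule.span_mono (Set.image_mono (fun i hi => lt_trans hi hlt))
      have hfiM : f iM ∈ Submodule.span k (f '' {i : ιt | i.1 < x}) :=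
        Submodule.subset_span (Set.mem_image_of_mem f hlt)
      calc x = succ iM := le_antisymm h2 h1
        _ = M ⊔ Submodule.span k {f iM} := hsuccEq iM
        _ ≤ Submodule.span k (f '' {i : ιt | i.1 < x}) :=
            sup_le hMspan ((Submodule.span_singleton_le_iff_mem _ _).2 hfiM)
  -- spanning
  have hspan : ⊤ ≤ Submodule.span k (Set.range f) := by
    refine le_trans (le_of_eq (hkey ⟨⊤, hTopU⟩)) ?_
    exact Submodule.span_mono (Set.image_subset_range f _)
  -- linear independence
  have hsets : ∀ i : ιt, {j : ιt | j < i} = {j : ιt | j.1 < i.1} := by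
    intro i
    ext j
    simp only [Set.mem_setOf_eq, lt_iff_le_not_ge]
    exact (and_congr Subtype.coe_le_coe (not_congr Subtype.coe_le_coe)).symm
  have hli : LinearIndependent k f := by
    refine li_of_wo f (fun i hmem => ?_)
    apply hf2 i
    rw [hkey ⟨i.1, i.2.1⟩]
    rwa [hsets i] at hmem
  let b : Module.Basis ιt k V := Module.Basis.mk hli hspan
  refine ⟨ιt, lo, hwf, b, ?_⟩
  intro T hT i
  have hcoe : ⇑b = f := Module.Basis.coe_mk hli hspan
  have h1 : T (b i) ∈ succ i := by
    rw [hcoe]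
    exact hInv (succ i) (hsuccU i) T hT (f i) (hf1 i)
  have h2 : succ i ≤ Submodule.span k (⇑b '' {j | lo.le j i}) := by
    rw [hcoe, hsuccEq i]
    apply sup_le
    · refine le_trans (le_of_eq (hkey ⟨i.1, i.2.1⟩)) ?_
      exact Submodule.span_mono (Set.image_mono
        (fun j (hj : j.1 < i.1) => le_of_lt (Subtype.coe_lt_coe.1 hj)))
    · exact (Submodule.span_singleton_le_iff_mem _ _).2
        (Submodule.subset_span (Set.mem_image_of_mem f (le_refl i)))
  exact h2 h1

/-- `X ⊆ End_k(V)` is triangularizable iff there is a set of `X`-invariant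
subspaces of `V` that is well-ordered by inclusion and maximal among all subsets of the set
of subspaces of `V` that are well-ordered by inclusion. -/
theorem stmt_2 [Nontrivial V] (X : Set (Module.End k V)) :
    (∃ (ι : Type v) (lo : LinearOrder ι), WellFounded lo.lt ∧
      ∃ b : Module.Basis ι k V, ∀ T ∈ X, ∀ i : ι,
        T (b i) ∈ Submodule.span k (⇑b '' {j | lo.le j i})) ↔
    ∃ U : Set (Submodule k V),
      (∀ W ∈ U, ∀ T ∈ X, ∀ v ∈ W, T v ∈ W) ∧
      WellOrderedByInclusion U ∧
      ∀ U' : Set (Submodule k V), WellOrderedByInclusion U' → U ⊆ U' → U' = U := by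
  constructor
  · rintro ⟨ι, lo, hwf, b, htri⟩
    exact fwd_dir X ι lo hwf b htri
  · rintro ⟨U, hInv, hWOI, hMax⟩
    exact rev_dir X U hInv hWOI hMax
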